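/- Let n, t, k be positive integers with n > 2k⁴t, and let F_1, …, F_t be k-uniform hypergraphs on a common vertex set of size n. If δ_1(F_i) > C(n−1, k−1) − C(n−t, k−1) for every i ∈ [t], then the family {F_1, …, F_t} admits a rainbow matching. -/

import Mathlib

open Finset

namespace RainbowAux

/-- Telescoping lower bound: C(b+d, r+1) ≥ C(b, r+1) + d·C(b, r). -/
lemma T1 (b r : ℕ) : ∀ d : ℕ, Nat.choose b (r+1) + d * Nat.choose b r ≤ Nat.choose (b + d) (r+1)
  | 0 => by simp
  | (d+1) => by
    have h := T1 b r d
    have pascal : Nat.choose (b + d + 1) (r+1)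
        = Nat.choose (b + d) r + Nat.choose (b + d) (r+1) := Nat.choose_succ_succ _ _
    have mono : Nat.choose b r ≤ Nat.choose (b + d) r :=
      Nat.choose_le_choose r (Nat.le_add_right _ _)
    have e1 : (d+1) * Nat.choose b r = d * Nat.choose b r + Nat.choose b r := by ring
    have e2 : b + (d+1) = b + d + 1 := by ring
    rw [e2, pascal, e1]
    omega

/-- Telescoping upper bound: C(b+d, r+1) ≤ C(b, r+1) + d·C(b+d-1, r). -/
lemma T2 (b r : ℕ) : ∀ d : ℕ, Nat.choose (b + d) (r+1) ≤ Nat.choose b (r+1) + d * Nat.choose (b + d - 1) r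
  | 0 => by simp
  | (d+1) => by
    have h := T2 b r d
    have pascal : Nat.choose (b + d + 1) (r+1)
        = Nat.choose (b + d) r + Nat.choose (b + d) (r+1) := Nat.choose_succ_succ _ _
    have mono : Nat.choose (b + d - 1) r ≤ Nat.choose (b + d) r :=
      Nat.choose_le_choose r (by omega)
    have e2 : b + (d+1) = b + d + 1 := by ring
    have e0 : b + d + 1 - 1 = b + d := by omega
    rw [e2, e0, pascal]
    have e1 : (d+1) * Nat.choose (b + d) r = d * Nat.choose (b + d) r + Nat.choose (b + d) r := by
      ring
    have h3 : d * Nat.choose (b + d - 1) r ≤ d * Nat.choose (b + d) r :=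
      Nat.mul_le_mul_left d mono
    omega

/-- Collected arithmetic consequences of `2 k⁴ (s+1) < n`, `k ≥ 2`. -/
lemma sizes (n k s : ℕ) (hk : 2 ≤ k) (hn : 2 * k ^ 4 * (s + 1) < n) :
    s + 1 + k ≤ n ∧ 33 ≤ n ∧ 2 * (s - 1) * (k - 2) + 2 ≤ n ∧ 2 * k^3 * s + 1 ≤ n := by
  have hkk : k ≤ k ^ 4 := Nat.le_self_pow (by omega) k
  have h16 : 2 ^ 4 ≤ k ^ 4 := Nat.pow_le_pow_left hk 4
  have hsA : s ≤ k ^ 4 * s := Nat.le_mul_of_pos_left s (by omega)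
  have hsplit : 2 * k ^ 4 * (s+1) = 2 * (k ^ 4 * s) + 2 * k ^ 4 := by ring
  have hP : (s - 1) * (k - 2) ≤ k ^ 4 * s := by
    calc (s-1) * (k-2) ≤ s * k ^ 4 := Nat.mul_le_mul (by omega) (by omega)
      _ = k ^ 4 * s := by ring
  have hP2 : 2 * (s-1) * (k-2) = 2 * ((s-1)*(k-2)) := by ring
  have hQ : k ^ 3 * s ≤ k ^ 4 * s := Nat.mul_le_mul_right s (Nat.pow_le_pow_right (by omega) (by omega))
  have hQ2 : 2 * k^3 * s = 2 * (k^3 * s) := by ring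
  omega

/-- L2: for k ≥ 2 and n large enough, C(n-2, k-2) ≤ 2·C(n-(s+1), k-2). -/
lemma L2 (n k s : ℕ) (hk : 2 ≤ k) (hn : 2 * k ^ 4 * (s + 1) < n) :
    Nat.choose (n - 2) (k - 2) ≤ 2 * Nat.choose (n - (s+1)) (k - 2) := by
  obtain ⟨hnsk, hn33, hnP, -⟩ := sizes n k s hk hn
  rcases Nat.lt_or_ge k 3 with hk2 | hk3
  · have : k - 2 = 0 := by omega
    simp [this]
  rcases Nat.eq_zero_or_pos s with hs0 | hs1
  · subst hs0
    have h : Nat.choose (n - 2) (k-2) ≤ Nat.choose (n - 1) (k-2) :=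
      Nat.choose_le_choose _ (by omega)
    have e : n - (0+1) = n - 1 := by omega
    rw [e]
    omega
  · have hb : (n - (s+1)) + (s - 1) = n - 2 := by omega
    have hr : (k - 3) + 1 = k - 2 := by omega
    have ht2 := T2 (n - (s+1)) (k-3) (s-1)
    rw [hb, hr] at ht2
    have e5 : n - 2 - 1 = n - 3 := by omega
    rw [e5] at ht2
    have hid := Nat.add_one_mul_choose_eq (n - 3) (k - 3)
    have e3 : n - 3 + 1 = n - 2 := by omega
    have e4 : k - 3 + 1 = k - 2 := by omega
    rw [e3, e4] at hid
    have hX : 0 < Nat.choose (n - 3) (k - 3) := Nat.choose_pos (by omega)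
    have key : 2 * (s - 1) * Nat.choose (n - 3) (k - 3) ≤ Nat.choose (n - 2) (k - 2) := by
      have h1 : 2 * (s - 1) * (k - 2) ≤ n - 2 := by omega
      have h2 : 2 * (s - 1) * Nat.choose (n - 3) (k - 3) * (k - 2)
          ≤ (n - 2) * Nat.choose (n - 3) (k - 3) := by
        calc 2 * (s - 1) * Nat.choose (n - 3) (k - 3) * (k - 2)
            = (2 * (s - 1) * (k - 2)) * Nat.choose (n - 3) (k - 3) := by ring
          _ ≤ (n - 2) * Nat.choose (n - 3) (k - 3) := Nat.mul_le_mul_right _ h1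
      rw [hid] at h2
      exact Nat.le_of_mul_le_mul_right h2 (by omega)
    have hMF : 2 * (s - 1) * Nat.choose (n - 3) (k - 3)
        = 2 * ((s - 1) * Nat.choose (n - 3) (k - 3)) := by ring
    omega



/-- Codegree bound: number of k-edges inside V containing two fixed vertices is ≤ C(|V|-2, k-2). -/
lemma codeg_le (k : ℕ) (V : Finset (Fin N)) (G : Finset (Finset (Fin N)))
    (hG : ∀ e ∈ G, e ⊆ V ∧ e.card = k) (v w : Fin N) (hv : v ∈ V) (hw : w ∈ V) (hvw : v ≠ w) :
    (G.filter (fun e => v ∈ e ∧ w ∈ e)).card ≤ Nat.choose (V.card - 2) (k - 2) := by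
  have hpairV : ({v, w} : Finset (Fin N)) ⊆ V := by
    intro x hx
    rcases mem_insert.mp hx with h | h
    · exact h ▸ hv
    · exact (mem_singleton.mp h) ▸ hw
  have hpair : ({v, w} : Finset (Fin N)).card = 2 := card_pair hvw
  have hVc : (V \ {v, w}).card = V.card - 2 := by rw [card_sdiff_of_subset hpairV, hpair]
  calc (G.filter (fun e => v ∈ e ∧ w ∈ e)).card
      ≤ ((V \ {v, w}).powersetCard (k - 2)).card := by
        apply card_le_card_of_injOn (fun e => e \ {v, w})
        · intro e he
          simp only [mem_coe, mem_filter] at he ⊢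
          obtain ⟨heG, hve, hwe⟩ := he
          have hpe : ({v, w} : Finset (Fin N)) ⊆ e := by
            intro x hx
            rcases mem_insert.mp hx with h | h
            · exact h ▸ hve
            · exact (mem_singleton.mp h) ▸ hwe
          rw [mem_powersetCard]
          constructor
          · exact sdiff_subset_sdiff (hG e heG).1 (le_refl _)
          · rw [card_sdiff_of_subset hpe, hpair, (hG e heG).2]
        · intro e₁ h₁ e₂ h₂ heq
          simp only [coe_filter, Set.mem_setOf_eq] at h₁ h₂
          have p₁ : ({v, w} : Finset (Fin N)) ⊆ e₁ := by
            intro x hx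
            rcases mem_insert.mp hx with h | h
            · exact h ▸ h₁.2.1
            · exact (mem_singleton.mp h) ▸ h₁.2.2
          have p₂ : ({v, w} : Finset (Fin N)) ⊆ e₂ := by
            intro x hx
            rcases mem_insert.mp hx with h | h
            · exact h ▸ h₂.2.1
            · exact (mem_singleton.mp h) ▸ h₂.2.2
          have := congrArg (fun s => s ∪ ({v, w} : Finset (Fin N))) heq
          simpa [sdiff_union_of_subset p₁, sdiff_union_of_subset p₂] using this
    _ = Nat.choose (V.card - 2) (k - 2) := by rw [card_powersetCard, hVc]

/-- Degree sum: ∑_{v ∈ V} deg(v) = k · |G|. -/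
lemma sum_deg (k : ℕ) (V : Finset (Fin N)) (G : Finset (Finset (Fin N)))
    (hG : ∀ e ∈ G, e ⊆ V ∧ e.card = k) :
    ∑ v ∈ V, (G.filter (fun e => v ∈ e)).card = k * G.card := by
  have h1 : ∀ v : Fin N, (G.filter (fun e => v ∈ e)).card = ∑ e ∈ G, if v ∈ e then 1 else 0 := by
    intro v; rw [Finset.card_filter]
  calc ∑ v ∈ V, (G.filter (fun e => v ∈ e)).card
      = ∑ v ∈ V, ∑ e ∈ G, if v ∈ e then 1 else 0 := by simp_rw [h1]
    _ = ∑ e ∈ G, ∑ v ∈ V, if v ∈ e then 1 else 0 := Finset.sum_comm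
    _ = ∑ e ∈ G, (V.filter (fun v => v ∈ e)).card := by simp_rw [Finset.card_filter]
    _ = ∑ e ∈ G, k := by
        apply Finset.sum_congr rfl
        intro e he
        rw [filter_mem_eq_inter, inter_eq_right.mpr (hG e he).1, (hG e he).2]
    _ = k * G.card := by rw [Finset.sum_const, smul_eq_mul, mul_comm]

/-- Edges (satisfying p) meeting S are at most ∑_{u∈S} (edges satisfying p through u). -/
lemma meet_le (G : Finset (Finset (Fin N))) (S : Finset (Fin N)) (p : Finset (Fin N) → Prop)
    [DecidablePred p] :
    (G.filter (fun e => p e ∧ ¬ Disjoint e S)).card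
      ≤ ∑ u ∈ S, (G.filter (fun e => p e ∧ u ∈ e)).card := by
  calc (G.filter (fun e => p e ∧ ¬ Disjoint e S)).card
      ≤ (S.biUnion (fun u => G.filter (fun e => p e ∧ u ∈ e))).card := by
        apply card_le_card
        intro e he
        rw [mem_filter] at he
        obtain ⟨heG, hpe, hnd⟩ := he
        rw [Finset.not_disjoint_iff] at hnd
        obtain ⟨u, hue, huS⟩ := hnd
        exact mem_biUnion.mpr ⟨u, huS, mem_filter.mpr ⟨heG, hpe, hue⟩⟩
    _ ≤ ∑ u ∈ S, (G.filter (fun e => p e ∧ u ∈ e)).card := card_biUnion_le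

/-- Variant without the extra predicate. -/
lemma meet_le' (G : Finset (Finset (Fin N))) (S : Finset (Fin N)) :
    (G.filter (fun e => ¬ Disjoint e S)).card
      ≤ ∑ u ∈ S, (G.filter (fun e => u ∈ e)).card := by
  calc (G.filter (fun e => ¬ Disjoint e S)).card
      ≤ (S.biUnion (fun u => G.filter (fun e => u ∈ e))).card := by
        apply card_le_card
        intro e he
        rw [mem_filter] at he
        obtain ⟨heG, hnd⟩ := he
        rw [Finset.not_disjoint_iff] at hnd
        obtain ⟨u, hue, huS⟩ := hnd
        exact mem_biUnion.mpr ⟨u, huS, mem_filter.mpr ⟨heG, hue⟩⟩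
    _ ≤ ∑ u ∈ S, (G.filter (fun e => u ∈ e)).card := card_biUnion_le

lemma aux (k : ℕ) (hk : 2 ≤ k) :
    ∀ s : ℕ, ∀ (N t : ℕ) (V : Finset (Fin N)) (I : Finset (Fin t))
      (G : Fin t → Finset (Finset (Fin N))),
      I.card = s → 2 * k ^ 4 * s < V.card →
      (∀ i ∈ I, ∀ e ∈ G i, e ⊆ V ∧ e.card = k) →
      (∀ i ∈ I, ∀ v ∈ V, Nat.choose (V.card - 1) (k - 1) - Nat.choose (V.card - s) (k - 1)
          < ((G i).filter (fun e => v ∈ e)).card) →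
      ∃ g : Fin t → Finset (Fin N), (∀ i ∈ I, g i ∈ G i) ∧
        ∀ i ∈ I, ∀ j ∈ I, i ≠ j → Disjoint (g i) (g j) := by
  intro s
  induction s with
  | zero =>
      intro N t V I G hcard _ _ _
      have hI : I = ∅ := card_eq_zero.mp hcard
      subst hI
      exact ⟨fun _ => ∅, fun i hi => absurd hi (notMem_empty i),
        fun i hi => absurd hi (notMem_empty i)⟩
  | succ s ih =>
      intro N t V I G hcard hn hGuni hGdeg
      obtain ⟨hnsk, hn33, hnP, hnQ⟩ := sizes V.card k s hk hn
      have h16 : 2 ^ 4 ≤ k ^ 4 := Nat.pow_le_pow_left hk 4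
      have hexpand : 2 * k ^ 4 * (s + 1) = 2 * (k ^ 4 * s) + 2 * k ^ 4 := by ring
      have hexpand2 : 2 * k ^ 4 * s = 2 * (k ^ 4 * s) := by ring
      by_cases hrich : ∃ i ∈ I, ∃ w ∈ V,
          k * s * Nat.choose (V.card - 2) (k - 2) < ((G i).filter (fun e => w ∈ e)).card
      · -- CASE 1 : a rich vertex exists
        obtain ⟨i₀, hi₀, w, hw, hrdeg⟩ := hrich
        have hIc : (I.erase i₀).card = s := by rw [card_erase_of_mem hi₀, hcard]; omega
        have hVc : (V.erase w).card = V.card - 1 := card_erase_of_mem hw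
        have harith : 2 * k ^ 4 * s < (V.erase w).card := by
          rw [hVc]; omega
        have huniform' : ∀ i ∈ I.erase i₀, ∀ e ∈ (G i).filter (fun e => w ∉ e),
            e ⊆ V.erase w ∧ e.card = k := by
          intro i hi e he
          obtain ⟨heG, hwe⟩ := mem_filter.mp he
          obtain ⟨hsub, hec⟩ := hGuni i (mem_of_mem_erase hi) e heG
          exact ⟨subset_erase.mpr ⟨hsub, hwe⟩, hec⟩
        have hdeg' : ∀ i ∈ I.erase i₀, ∀ v ∈ V.erase w,
            Nat.choose ((V.erase w).card - 1) (k - 1)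
              - Nat.choose ((V.erase w).card - s) (k - 1)
            < (((G i).filter (fun e => w ∉ e)).filter (fun e => v ∈ e)).card := by
          intro i hi v hv
          have hiI := mem_of_mem_erase hi
          have hvV := mem_of_mem_erase hv
          have hvw : v ≠ w := (mem_erase.mp hv).1
          have hs1 : 1 ≤ s := by
            have : 0 < (I.erase i₀).card := card_pos.mpr ⟨i, hi⟩
            omega
          have hsplit := Finset.card_filter_add_card_filter_not
            (s := (G i).filter (fun e => v ∈ e)) (p := fun e => w ∈ e)
          rw [filter_filter, filter_filter] at hsplit
          have hB : ((G i).filter (fun e => w ∉ e)).filter (fun e => v ∈ e)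
              = (G i).filter (fun e => v ∈ e ∧ ¬ w ∈ e) := by
            rw [filter_filter]
            apply filter_congr
            intro e _
            constructor
            · rintro ⟨h1, h2⟩; exact ⟨h2, h1⟩
            · rintro ⟨h1, h2⟩; exact ⟨h2, h1⟩
          have hcd : ((G i).filter (fun e => v ∈ e ∧ w ∈ e)).card
              ≤ Nat.choose (V.card - 2) (k - 2) :=
            codeg_le k V (G i) (hGuni i hiI) v w hvV hw hvw
          have pascal : Nat.choose (V.card - 1) (k - 1)
              = Nat.choose (V.card - 2) (k - 2) + Nat.choose (V.card - 2) ((k-2)+1) := by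
            have e3 : V.card - 1 = (V.card - 2) + 1 := by omega
            have e4 : k - 1 = (k - 2) + 1 := by omega
            rw [e3, e4, Nat.choose_succ_succ]
          have e4 : (k - 2) + 1 = k - 1 := by omega
          rw [e4] at pascal
          have mono : Nat.choose (V.card - (s+1)) (k-1) ≤ Nat.choose (V.card - 2) (k-1) :=
            Nat.choose_le_choose _ (by omega)
          have hd := hGdeg i hiI v hvV
          rw [hVc, hB]
          have e1 : V.card - 1 - 1 = V.card - 2 := by omega
          have e2 : V.card - 1 - s = V.card - (s+1) := by omega
          rw [e1, e2]
          omega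
        obtain ⟨g, hg1, hg2⟩ := ih N t (V.erase w) (I.erase i₀)
          (fun i => (G i).filter (fun e => w ∉ e)) hIc harith huniform' hdeg'
        set S := (I.erase i₀).biUnion g with hS
        have hgG : ∀ j ∈ I.erase i₀, g j ∈ G j ∧ w ∉ g j := by
          intro j hj
          exact mem_filter.mp (hg1 j hj)
        have hSV : S ⊆ V.erase w := by
          apply biUnion_subset.mpr
          intro j hj
          exact (huniform' j hj (g j) (hg1 j hj)).1
        have hScard : S.card ≤ k * s := by
          calc S.card ≤ ∑ j ∈ I.erase i₀, (g j).card := card_biUnion_le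
            _ = ∑ j ∈ I.erase i₀, k := by
                apply sum_congr rfl
                intro j hj
                exact (hGuni j (mem_of_mem_erase hj) (g j) (hgG j hj).1).2
            _ = s * k := by rw [sum_const, hIc, smul_eq_mul]
            _ = k * s := mul_comm _ _
        have hmeet : ((G i₀).filter (fun e => w ∈ e ∧ ¬ Disjoint e S)).card
            ≤ k * s * Nat.choose (V.card - 2) (k - 2) := by
          calc ((G i₀).filter (fun e => w ∈ e ∧ ¬ Disjoint e S)).card
              ≤ ∑ u ∈ S, ((G i₀).filter (fun e => w ∈ e ∧ u ∈ e)).card :=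
                meet_le (G i₀) S (fun e => w ∈ e)
            _ ≤ S.card • Nat.choose (V.card - 2) (k - 2) := by
                apply sum_le_card_nsmul
                intro u hu
                have huV : u ∈ V := mem_of_mem_erase (hSV hu)
                have huw : u ≠ w := (mem_erase.mp (hSV hu)).1
                exact codeg_le k V (G i₀) (hGuni i₀ hi₀) w u hw huV (Ne.symm huw)
            _ = S.card * Nat.choose (V.card - 2) (k - 2) := smul_eq_mul _ _
            _ ≤ k * s * Nat.choose (V.card - 2) (k - 2) := Nat.mul_le_mul_right _ hScard
        have hsplitw := Finset.card_filter_add_card_filter_not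
          (s := (G i₀).filter (fun e => w ∈ e)) (p := fun e => Disjoint e S)
        rw [filter_filter, filter_filter] at hsplitw
        have hpos : 0 < ((G i₀).filter (fun e => w ∈ e ∧ Disjoint e S)).card := by omega
        obtain ⟨e₀, he₀⟩ := card_pos.mp hpos
        obtain ⟨he₀G, hwe₀, hdisj⟩ := mem_filter.mp he₀
        refine ⟨Function.update g i₀ e₀, ?_, ?_⟩
        · intro i hi
          by_cases hii : i = i₀
          · subst hii; simpa [Function.update_self] using he₀G
          · rw [Function.update_of_ne hii]
            exact (hgG i (mem_erase.mpr ⟨hii, hi⟩)).1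
        · intro i hi j hj hij
          by_cases hii : i = i₀
          · subst hii
            rw [Function.update_self, Function.update_of_ne (Ne.symm hij)]
            exact disjoint_of_subset_right
              (subset_biUnion_of_mem g (mem_erase.mpr ⟨Ne.symm hij, hj⟩)) hdisj
          · by_cases hjj : j = i₀
            · subst hjj
              rw [Function.update_self, Function.update_of_ne hii]
              exact (disjoint_of_subset_right
                (subset_biUnion_of_mem g (mem_erase.mpr ⟨hii, hi⟩)) hdisj).symm
            · rw [Function.update_of_ne hii, Function.update_of_ne hjj]
              exact hg2 i (mem_erase.mpr ⟨hii, hi⟩) j (mem_erase.mpr ⟨hjj, hj⟩) hij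
      · -- CASE 2 : all degrees small, greedy
        push_neg at hrich
        have hIpos : 0 < I.card := by omega
        obtain ⟨i₀, hi₀⟩ := card_pos.mp hIpos
        have hIc : (I.erase i₀).card = s := by rw [card_erase_of_mem hi₀, hcard]; omega
        have harith : 2 * k ^ 4 * s < V.card := by omega
        have hdeg' : ∀ i ∈ I.erase i₀, ∀ v ∈ V,
            Nat.choose (V.card - 1) (k - 1) - Nat.choose (V.card - s) (k - 1)
            < ((G i).filter (fun e => v ∈ e)).card := by
          intro i hi v hv
          have hd := hGdeg i (mem_of_mem_erase hi) v hv
          have mono : Nat.choose (V.card - (s+1)) (k-1) ≤ Nat.choose (V.card - s) (k-1) :=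
            Nat.choose_le_choose _ (by omega)
          omega
        obtain ⟨g, hg1, hg2⟩ := ih N t V (I.erase i₀) G hIc harith
          (fun i hi => hGuni i (mem_of_mem_erase hi)) hdeg'
        set S := (I.erase i₀).biUnion g with hS
        have hSV : S ⊆ V := by
          apply biUnion_subset.mpr
          intro j hj
          exact (hGuni j (mem_of_mem_erase hj) (g j) (hg1 j hj)).1
        have hScard : S.card ≤ k * s := by
          calc S.card ≤ ∑ j ∈ I.erase i₀, (g j).card := card_biUnion_le
            _ = ∑ j ∈ I.erase i₀, k := by
                apply sum_congr rfl
                intro j hj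
                exact (hGuni j (mem_of_mem_erase hj) (g j) (hg1 j hj)).2
            _ = s * k := by rw [sum_const, hIc, smul_eq_mul]
            _ = k * s := mul_comm _ _
        have hmeet : ((G i₀).filter (fun e => ¬ Disjoint e S)).card
            ≤ k * s * (k * s * Nat.choose (V.card - 2) (k - 2)) := by
          calc ((G i₀).filter (fun e => ¬ Disjoint e S)).card
              ≤ ∑ u ∈ S, ((G i₀).filter (fun e => u ∈ e)).card := meet_le' (G i₀) S
            _ ≤ S.card • (k * s * Nat.choose (V.card - 2) (k - 2)) := by
                apply sum_le_card_nsmul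
                intro u hu
                exact hrich i₀ hi₀ u (hSV hu)
            _ = S.card * (k * s * Nat.choose (V.card - 2) (k - 2)) := smul_eq_mul _ _
            _ ≤ k * s * (k * s * Nat.choose (V.card - 2) (k - 2)) :=
                Nat.mul_le_mul_right _ hScard
        -- size lower bound for G i₀
        have hdeglb : ∀ v ∈ V,
            s * Nat.choose (V.card - (s+1)) (k-2) + 1 ≤ ((G i₀).filter (fun e => v ∈ e)).card := by
          intro v hv
          have hd := hGdeg i₀ hi₀ v hv
          have ht1 := T1 (V.card - (s+1)) (k-2) s
          have e4 : (k - 2) + 1 = k - 1 := by omega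
          have eb : (V.card - (s+1)) + s = V.card - 1 := by omega
          rw [e4, eb] at ht1
          omega
        have hsize : V.card * (s * Nat.choose (V.card - (s+1)) (k-2) + 1) ≤ k * (G i₀).card := by
          have hsd := sum_deg k V (G i₀) (hGuni i₀ hi₀)
          calc V.card * (s * Nat.choose (V.card - (s+1)) (k-2) + 1)
              = V.card • (s * Nat.choose (V.card - (s+1)) (k-2) + 1) := (smul_eq_mul _ _).symm
            _ ≤ ∑ v ∈ V, ((G i₀).filter (fun e => v ∈ e)).card :=
                card_nsmul_le_sum V _ _ hdeglb
            _ = k * (G i₀).card := hsd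
        have hL2 := L2 V.card k s hk hn
        have hCpos : 0 < Nat.choose (V.card - (s+1)) (k-2) := Nat.choose_pos (by omega)
        -- master inequality: meet < |G i₀|
        have hmaster : ((G i₀).filter (fun e => ¬ Disjoint e S)).card < (G i₀).card := by
          set C2 := Nat.choose (V.card - 2) (k - 2) with hC2
          set C' := Nat.choose (V.card - (s+1)) (k-2) with hC'
          have h1 : k * (k * s * (k * s * C2)) = k^3 * s^2 * C2 := by ring
          have h2 : k^3 * s^2 * C2 ≤ k^3 * s^2 * (2 * C') := Nat.mul_le_mul_left _ hL2
          have h3 : k^3 * s^2 * (2 * C') = (2 * k^3 * s) * (s * C') := by ring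
          have h4 : (2 * k^3 * s) * (s * C') < V.card * (s * C') + V.card := by
            rcases Nat.eq_zero_or_pos s with hs0 | hs1
            · subst hs0
              simp only [Nat.mul_zero, Nat.zero_mul, Nat.zero_add]
              omega
            · have hlt : 2 * k^3 * s < V.card := by omega
              have hpos' : 0 < s * C' := Nat.mul_pos hs1 hCpos
              calc (2 * k^3 * s) * (s * C') < V.card * (s * C') :=
                    Nat.mul_lt_mul_of_lt_of_le hlt (le_refl _) hpos'
                _ ≤ V.card * (s * C') + V.card := Nat.le_add_right _ _
          have h5 : V.card * (s * C') + V.card ≤ k * (G i₀).card := by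
            have : V.card * (s * C' + 1) = V.card * (s * C') + V.card := by ring
            omega
          have hk0 : 0 < k := by omega
          have : k * ((G i₀).filter (fun e => ¬ Disjoint e S)).card < k * (G i₀).card := by
            calc k * ((G i₀).filter (fun e => ¬ Disjoint e S)).card
                ≤ k * (k * s * (k * s * C2)) := Nat.mul_le_mul_left _ hmeet
              _ = k^3 * s^2 * C2 := h1
              _ ≤ k^3 * s^2 * (2 * C') := h2
              _ = (2 * k^3 * s) * (s * C') := h3
              _ < V.card * (s * C') + V.card := h4
              _ ≤ k * (G i₀).card := h5
          exact Nat.lt_of_mul_lt_mul_left this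
        have hsplitd := Finset.card_filter_add_card_filter_not
          (s := G i₀) (p := fun e => Disjoint e S)
        have hpos : 0 < ((G i₀).filter (fun e => Disjoint e S)).card := by omega
        obtain ⟨e₀, he₀⟩ := card_pos.mp hpos
        obtain ⟨he₀G, hdisj⟩ := mem_filter.mp he₀
        refine ⟨Function.update g i₀ e₀, ?_, ?_⟩
        · intro i hi
          by_cases hii : i = i₀
          · subst hii; simpa [Function.update_self] using he₀G
          · rw [Function.update_of_ne hii]
            exact hg1 i (mem_erase.mpr ⟨hii, hi⟩)
        · intro i hi j hj hij
          by_cases hii : i = i₀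
          · subst hii
            rw [Function.update_self, Function.update_of_ne (Ne.symm hij)]
            exact disjoint_of_subset_right
              (subset_biUnion_of_mem g (mem_erase.mpr ⟨Ne.symm hij, hj⟩)) hdisj
          · by_cases hjj : j = i₀
            · subst hjj
              rw [Function.update_self, Function.update_of_ne hii]
              exact (disjoint_of_subset_right
                (subset_biUnion_of_mem g (mem_erase.mpr ⟨hii, hi⟩)) hdisj).symm
            · rw [Function.update_of_ne hii, Function.update_of_ne hjj]
              exact hg2 i (mem_erase.mpr ⟨hii, hi⟩) j (mem_erase.mpr ⟨hjj, hj⟩) hij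


end RainbowAux

/-- Let `n, t, k` be positive integers with `n > 2k⁴t`, and let
`F 1, …, F t` be `k`-uniform hypergraphs on a common vertex set of size `n`
(here `Fin n`). If `δ₁(F i) > C(n-1, k-1) - C(n-t, k-1)` for every `i`, then
the family admits a rainbow matching. -/
theorem rainbow_matching_small_family (n t k : ℕ) (hn : 0 < n) (ht : 0 < t)
    (hk : 0 < k) (hbig : 2 * k ^ 4 * t < n)
    (F : Fin t → Finset (Finset (Fin n)))
    (huniform : ∀ i, ∀ e ∈ F i, e.card = k)
    (hdeg : ∀ i, ∀ v : Fin n,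
      Nat.choose (n - 1) (k - 1) - Nat.choose (n - t) (k - 1) <
        ((F i).filter (fun e => v ∈ e)).card) :
    ∃ g : Fin t → Finset (Fin n),
      (∀ i, g i ∈ F i) ∧ ∀ i j, i ≠ j → Disjoint (g i) (g j) := by
  rcases Nat.lt_or_ge k 2 with hk1 | hk2
  · -- k = 1 : every singleton is an edge
    have hk1' : k = 1 := by omega
    subst hk1'
    have he1 : 2 * 1 ^ 4 * t = 2 * t := by ring
    have htn : t ≤ n := by omega
    refine ⟨fun i => {(⟨i.1, by omega⟩ : Fin n)}, ?_, ?_⟩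
    · intro i
      have hd := hdeg i ⟨i.1, by omega⟩
      rw [Nat.choose_zero_right, Nat.choose_zero_right] at hd
      have hpos : 0 < ((F i).filter
          (fun e => (⟨i.1, by omega⟩ : Fin n) ∈ e)).card := by omega
      obtain ⟨e, he⟩ := Finset.card_pos.mp hpos
      obtain ⟨heF, hve⟩ := Finset.mem_filter.mp he
      obtain ⟨a, ha⟩ := Finset.card_eq_one.mp (huniform i e heF)
      rw [ha] at hve
      have hav : (⟨i.1, by omega⟩ : Fin n) = a := Finset.mem_singleton.mp hve
      show ({(⟨i.1, by omega⟩ : Fin n)} : Finset (Fin n)) ∈ F i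
      rw [hav, ← ha]
      exact heF
    · intro i j hij
      rw [Finset.disjoint_singleton]
      intro h
      apply hij
      have := congrArg Fin.val h
      exact Fin.ext this
  · -- k ≥ 2 : main induction
    have hcard : (Finset.univ : Finset (Fin t)).card = t := by simp
    have harith : 2 * k ^ 4 * t < (Finset.univ : Finset (Fin n)).card := by simpa using hbig
    have huni : ∀ i ∈ (Finset.univ : Finset (Fin t)), ∀ e ∈ F i,
        e ⊆ (Finset.univ : Finset (Fin n)) ∧ e.card = k :=
      fun i _ e he => ⟨Finset.subset_univ e, huniform i e he⟩
    have hdeg' : ∀ i ∈ (Finset.univ : Finset (Fin t)), ∀ v ∈ (Finset.univ : Finset (Fin n)),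
        Nat.choose ((Finset.univ : Finset (Fin n)).card - 1) (k - 1)
          - Nat.choose ((Finset.univ : Finset (Fin n)).card - t) (k - 1) <
          ((F i).filter (fun e => v ∈ e)).card := by
      intro i _ v _
      simpa using hdeg i v
    obtain ⟨g, h1, h2⟩ := RainbowAux.aux k hk2 t n t Finset.univ Finset.univ F
      hcard harith huni hdeg'
    exact ⟨g, fun i => h1 i (Finset.mem_univ i),
      fun i j hij => h2 i (Finset.mem_univ i) j (Finset.mem_univ j) hij⟩
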